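/- Let σ := (1 2 ⋯ ℓ+1) ∈ 𝔖_{ℓ+1} and k ∈ {1, …, ℓ+1}, and set g := gcd(ℓ+1, k) and d := (ℓ+1)/g. Then #{τ ∈ 𝔖_{ℓ+1} : τσ^kτ^{-1} ∈ ⟨σ⟩} = φ_g(ℓ+1) · (ℓ+1)(ℓ+1−d)(ℓ+1−2d) ⋯ (ℓ+1−d(g−1)). -/

import Mathlib

open AddSubgroup

section Aux
variable {A : Type*} [AddCommGroup A]

lemma pergen_step {κ m : A} (τ : Equiv.Perm A) (h : ∀ x, τ (x + κ) = τ x + m) :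
    ∀ (z : ℤ) (x : A), τ (x + z • κ) = τ x + z • m := by
  intro z
  induction z using Int.induction_on with
  | zero => simp
  | succ n ih =>
    intro x
    have h3 : x + ((n : ℤ) + 1) • κ = (x + (n : ℤ) • κ) + κ := by
      rw [add_smul, one_zsmul, add_assoc]
    rw [h3, h, ih, add_smul, one_zsmul, add_assoc]
  | pred n ih =>
    intro x
    have h2 : τ ((x + (-(n : ℤ) - 1) • κ) + κ) = τ (x + (-(n : ℤ) - 1) • κ) + m := h _
    have h3 : (x + (-(n : ℤ) - 1) • κ) + κ = x + (-(n : ℤ)) • κ := by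
      rw [sub_smul, one_zsmul]; abel
    rw [h3, ih] at h2
    have h4 : τ (x + (-(n : ℤ) - 1) • κ) = τ x + (-(n : ℤ)) • m - m :=
      (eq_sub_iff_add_eq.mpr h2.symm)
    rw [h4, sub_smul, one_zsmul]; abel

lemma pergen_inv {κ m : A} (τ : Equiv.Perm A) (h : ∀ x, τ (x + κ) = τ x + m) :
    ∀ y, τ⁻¹ (y + m) = τ⁻¹ y + κ := by
  intro y
  apply τ.injective
  rw [Equiv.Perm.coe_inv, Equiv.apply_symm_apply, h, Equiv.apply_symm_apply]

lemma pergen_order {κ m : A} (τ : Equiv.Perm A) (h : ∀ x, τ (x + κ) = τ x + m) :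
    addOrderOf m = addOrderOf κ := by
  have key : ∀ (a b : A) (σ : Equiv.Perm A), (∀ x, σ (x + a) = σ x + b) →
      addOrderOf b ∣ addOrderOf a := by
    intro a b σ hσ
    apply addOrderOf_dvd_of_nsmul_eq_zero
    have h1 : ((addOrderOf a : ℤ)) • a = 0 := by
      rw [natCast_zsmul]; exact addOrderOf_nsmul_eq_zero a
    have h2 := pergen_step σ hσ (addOrderOf a : ℤ) 0
    rw [h1, add_zero] at h2
    have h3 : (addOrderOf a : ℤ) • b = 0 := (left_eq_add).mp h2
    rwa [natCast_zsmul] at h3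
  exact Nat.dvd_antisymm (key κ m τ h) (key m κ τ⁻¹ (pergen_inv τ h))

lemma fiber_card [Fintype A] {κ m : A}
    (hord : addOrderOf m = addOrderOf κ) (hmem : m ∈ zmultiples κ) :
    Nat.card {τ : Equiv.Perm A // ∀ x, τ (x + κ) = τ x + m} =
      Nat.factorial (Nat.card (A ⧸ zmultiples κ)) *
        addOrderOf κ ^ Nat.card (A ⧸ zmultiples κ) := by
  classical
  set H := zmultiples κ with hH
  have hHm : zmultiples m = H := by
    apply AddSubgroup.eq_of_le_of_card_ge (zmultiples_le.mpr hmem)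
    rw [Nat.card_zmultiples, Nat.card_zmultiples, hord]
  -- quotient setup
  set Q := A ⧸ H with hQ
  let q : A → Q := QuotientAddGroup.mk
  let s : Q → A := Quotient.out
  have hqs : ∀ c, q (s c) = c := fun c => QuotientAddGroup.out_eq' c
  have hdiff : ∀ x y : A, q x = q y → x - y ∈ H := by
    intro x y hxy
    rw [QuotientAddGroup.eq] at hxy
    have := neg_mem hxy
    simpa [neg_add_rev, neg_add_eq_sub] using this
  have hqH : ∀ (a h : A), h ∈ H → q (a + h) = q a := by
    intro a h hh
    show QuotientAddGroup.mk (a + h) = QuotientAddGroup.mk a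
    rw [QuotientAddGroup.eq]
    simpa using hh
  have hsub : ∀ a, a - s (q a) ∈ H := fun a => hdiff a (s (q a)) (hqs (q a)).symm
  -- the twisting maps
  let φ : A → A := fun x => if h : x ∈ H then ((mem_zmultiples_iff.mp h).choose • m) else 0
  let ψ : A → A := fun x =>
    if h : x ∈ zmultiples m then ((mem_zmultiples_iff.mp h).choose • κ) else 0
  have congr_smul : ∀ (z z' : ℤ) (a b : A), addOrderOf b = addOrderOf a →
      z • a = z' • a → z • b = z' • b := by
    intro z z' a b hab hza
    have h1 : (z - z') • a = 0 := by rw [sub_smul, hza, sub_self]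
    have h2 : (addOrderOf a : ℤ) ∣ z - z' := addOrderOf_dvd_iff_zsmul_eq_zero.mpr h1
    have h3 : (z - z') • b = 0 := by
      rw [← hab] at h2
      exact addOrderOf_dvd_iff_zsmul_eq_zero.mp h2
    rw [sub_smul, sub_eq_zero] at h3
    exact h3
  have hφ : ∀ z : ℤ, φ (z • κ) = z • m := by
    intro z
    have hz : z • κ ∈ H := mem_zmultiples_iff.mpr ⟨z, rfl⟩
    have hspec : (mem_zmultiples_iff.mp hz).choose • κ = z • κ :=
      (mem_zmultiples_iff.mp hz).choose_spec
    simp only [φ, dif_pos hz]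
    exact congr_smul _ _ κ m hord hspec
  have hψ : ∀ z : ℤ, ψ (z • m) = z • κ := by
    intro z
    have hz : z • m ∈ zmultiples m := mem_zmultiples_iff.mpr ⟨z, rfl⟩
    have hspec : (mem_zmultiples_iff.mp hz).choose • m = z • m :=
      (mem_zmultiples_iff.mp hz).choose_spec
    simp only [ψ, dif_pos hz]
    exact congr_smul _ _ m κ hord.symm hspec
  have hφmem : ∀ x, φ x ∈ H := by
    intro x
    simp only [φ]
    split_ifs with h
    · rw [← hHm]; exact mem_zmultiples_iff.mpr ⟨_, rfl⟩
    · exact zero_mem _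
  have hψmem : ∀ x, ψ x ∈ H := by
    intro x
    simp only [ψ]
    split_ifs with h
    · exact mem_zmultiples_iff.mpr ⟨_, rfl⟩
    · exact zero_mem _
  have hψφ : ∀ x ∈ H, ψ (φ x) = x := by
    intro x hx
    obtain ⟨z, rfl⟩ := mem_zmultiples_iff.mp hx
    rw [hφ, hψ]
  have hφψ : ∀ x ∈ H, φ (ψ x) = x := by
    intro x hx
    rw [← hHm] at hx
    obtain ⟨z, rfl⟩ := mem_zmultiples_iff.mp hx
    rw [hψ, hφ]
  have hφadd : ∀ x ∈ H, φ (x + κ) = φ x + m := by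
    intro x hx
    obtain ⟨z, rfl⟩ := mem_zmultiples_iff.mp hx
    have h1 : z • κ + κ = (z + 1) • κ := by rw [add_smul, one_zsmul]
    rw [h1, hφ, hφ, add_smul, one_zsmul]
  have hφ0 : φ 0 = 0 := by
    have := hφ 0
    simpa using this
  -- the parametrization
  let F : (Q ≃ Q) × (Q → H) → A → A := fun p a =>
    s (p.1 (q a)) + ((p.2 (p.1 (q a)) : A)) + φ (a - s (q a))
  let G : (Q ≃ Q) × (Q → H) → A → A := fun p b =>
    s (p.1.symm (q b)) + ψ (b - s (q b) - (p.2 (q b) : A))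
  have hqF : ∀ p a, q (F p a) = p.1 (q a) := by
    intro p a
    show q (s (p.1 (q a)) + (p.2 (p.1 (q a)) : A) + φ (a - s (q a))) = _
    rw [add_assoc, hqH _ _ (add_mem (p.2 _).2 (hφmem _)), hqs]
  have hqG : ∀ p b, q (G p b) = p.1.symm (q b) := by
    intro p b
    show q (s (p.1.symm (q b)) + ψ _) = _
    rw [hqH _ _ (hψmem _), hqs]
  have hGF : ∀ p a, G p (F p a) = a := by
    intro p a
    show s (p.1.symm (q (F p a))) + ψ (F p a - s (q (F p a)) - (p.2 (q (F p a)) : A)) = a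
    rw [hqF, Equiv.symm_apply_apply]
    have h1 : F p a - s (p.1 (q a)) - (p.2 (p.1 (q a)) : A) = φ (a - s (q a)) := by
      show s (p.1 (q a)) + (p.2 (p.1 (q a)) : A) + φ (a - s (q a)) - _ - _ = _
      abel
    rw [h1, hψφ _ (hsub a)]
    abel
  have hFG : ∀ p b, F p (G p b) = b := by
    intro p b
    show s (p.1 (q (G p b))) + (p.2 (p.1 (q (G p b))) : A) + φ (G p b - s (q (G p b))) = b
    rw [hqG, Equiv.apply_symm_apply]
    have h1 : G p b - s (p.1.symm (q b)) = ψ (b - s (q b) - (p.2 (q b) : A)) := by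
      show s (p.1.symm (q b)) + ψ _ - _ = _
      abel
    have h2 : b - s (q b) - (p.2 (q b) : A) ∈ H :=
      sub_mem (hsub b) (p.2 (q b)).2
    rw [h1, hφψ _ h2]
    abel
  have hFadd : ∀ p a, F p (a + κ) = F p a + m := by
    intro p a
    have hκH : κ ∈ H := mem_zmultiples κ
    show s (p.1 (q (a + κ))) + (p.2 (p.1 (q (a + κ))) : A) + φ (a + κ - s (q (a + κ))) =
      F p a + m
    rw [hqH _ _ hκH]
    have h1 : a + κ - s (q a) = (a - s (q a)) + κ := by abel
    rw [h1, hφadd _ (hsub a)]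
    show _ = s (p.1 (q a)) + (p.2 (p.1 (q a)) : A) + φ (a - s (q a)) + m
    abel
  let B : (Q ≃ Q) × (Q → H) → {τ : Equiv.Perm A // ∀ x, τ (x + κ) = τ x + m} := fun p =>
    ⟨⟨F p, G p, hGF p, hFG p⟩, hFadd p⟩
  have hBinj : Function.Injective B := by
    intro p p' hpp
    have hF : F p = F p' := congrArg (fun t => (t : {τ : Equiv.Perm A // _}).1.toFun) hpp
    have he : p.1 = p'.1 := by
      ext c
      have h1 : q (F p (s c)) = p.1 c := by rw [hqF, hqs]
      have h2 : q (F p' (s c)) = p'.1 c := by rw [hqF, hqs]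
      rw [← h1, ← h2, hF]
    have hf : p.2 = p'.2 := by
      funext c
      apply Subtype.ext
      have key : ∀ (r : (Q ≃ Q) × (Q → H)) (c : Q), (r.2 c : A) = F r (s (r.1.symm c)) - s c := by
        intro r c
        show (r.2 c : A) =
          s (r.1 (q (s (r.1.symm c)))) + (r.2 (r.1 (q (s (r.1.symm c)))) : A) +
            φ (s (r.1.symm c) - s (q (s (r.1.symm c)))) - s c
        rw [hqs, Equiv.apply_symm_apply, sub_self, hφ0]
        abel
      rw [key p c, key p' c, hF, he]
    exact Prod.ext he hf
  have hBsurj : Function.Surjective B := by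
    rintro ⟨τ, hτ⟩
    have hstep := pergen_step τ hτ
    have hstep' := pergen_step τ⁻¹ (pergen_inv τ hτ)
    have hcong : ∀ x y : A, q x = q y → q (τ x) = q (τ y) := by
      intro x y hxy
      obtain ⟨z, hz⟩ := mem_zmultiples_iff.mp (hdiff x y hxy)
      have hx : x = y + z • κ := by rw [hz]; abel
      rw [hx, hstep z y, hqH _ _ (hHm ▸ mem_zmultiples_iff.mpr ⟨z, rfl⟩)]
    have hcong' : ∀ x y : A, q x = q y → q (τ⁻¹ x) = q (τ⁻¹ y) := by
      intro x y hxy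
      obtain ⟨z, hz⟩ := mem_zmultiples_iff.mp (hHm.symm ▸ hdiff x y hxy)
      have hx : x = y + z • m := by rw [hz]; abel
      rw [hx, hstep' z y, hqH _ _ (mem_zmultiples_iff.mpr ⟨z, rfl⟩)]
    let e : Q ≃ Q :=
      { toFun := fun c => q (τ (s c))
        invFun := fun c => q (τ⁻¹ (s c))
        left_inv := by
          intro c
          have h1 : q (τ⁻¹ (s (q (τ (s c))))) = q (τ⁻¹ (τ (s c))) :=
            hcong' _ _ (hqs _)
          simpa [hqs] using h1
        right_inv := by
          intro c
          have h1 : q (τ (s (q (τ⁻¹ (s c))))) = q (τ (τ⁻¹ (s c))) :=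
            hcong _ _ (hqs _)
          simpa [hqs, Equiv.Perm.coe_inv] using h1 }
    have hqe : ∀ c, q (τ (s c)) = e c := fun _ => rfl
    let f : Q → H := fun c => ⟨τ (s (e.symm c)) - s c, by
      apply hdiff
      rw [hqs]
      show e (e.symm c) = c
      exact e.apply_symm_apply c⟩
    refine ⟨⟨e, f⟩, ?_⟩
    apply Subtype.ext
    apply Equiv.ext
    intro a
    show F ⟨e, f⟩ a = τ a
    obtain ⟨z, hz⟩ := mem_zmultiples_iff.mp (hsub a)
    have ha : a = s (q a) + z • κ := by rw [hz]; abel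
    have hτa : τ a = τ (s (q a)) + z • m := by
      conv_lhs => rw [ha]
      exact hstep z _
    show s (e (q a)) + (f (e (q a)) : A) + φ (a - s (q a)) = τ a
    have hfval : (f (e (q a)) : A) = τ (s (q a)) - s (e (q a)) := by
      simp only [f, Equiv.symm_apply_apply]
    rw [hfval, ← hz, hφ, hτa]
    abel
  have hcard : Nat.card {τ : Equiv.Perm A // ∀ x, τ (x + κ) = τ x + m} =
      Nat.card ((Q ≃ Q) × (Q → H)) :=
    (Nat.card_eq_of_bijective B ⟨hBinj, hBsurj⟩).symm
  rw [hcard, Nat.card_prod]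
  haveI : Fintype Q := Fintype.ofFinite Q
  have hc1 : Nat.card (Q ≃ Q) = Nat.factorial (Nat.card Q) := by
    rw [Nat.card_eq_fintype_card, Nat.card_eq_fintype_card, Fintype.card_equiv (Equiv.refl Q)]
  have hc2 : Nat.card (Q → H) = addOrderOf κ ^ Nat.card Q := by
    rw [Nat.card_eq_fintype_card, Nat.card_eq_fintype_card, Fintype.card_fun,
      ← Nat.card_eq_fintype_card, Nat.card_zmultiples]
  rw [hc1, hc2]
end Aux

/-- Let `σ = (1 2 ⋯ ℓ+1)` (i.e. `finRotate (ℓ+1)`) and `k ∈ {1,…,ℓ+1}`,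
and set `g = gcd(ℓ+1, k)` and `d = (ℓ+1)/g`.  Then
`#{τ ∈ 𝔖_{ℓ+1} : τ σ^k τ⁻¹ ∈ ⟨σ⟩} = φ_g(ℓ+1) · (ℓ+1)(ℓ+1−d)(ℓ+1−2d)⋯(ℓ+1−d(g−1))`,
where `φ_g(ℓ+1) = #{i ∈ {1,…,ℓ+1} : gcd(ℓ+1, i) = g}`. -/
theorem stmt_19 (ℓ k : ℕ) (hk1 : 1 ≤ k) (hk2 : k ≤ ℓ + 1)
    (g d : ℕ) (hg : g = Nat.gcd (ℓ + 1) k) (hd : d = (ℓ + 1) / g) :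
    Nat.card {τ : Equiv.Perm (Fin (ℓ + 1)) //
        τ * (finRotate (ℓ + 1)) ^ k * τ⁻¹ ∈ Subgroup.zpowers (finRotate (ℓ + 1))} =
      ((Finset.Icc 1 (ℓ + 1)).filter fun i => Nat.gcd (ℓ + 1) i = g).card *
        ∏ j ∈ Finset.range g, (ℓ + 1 - d * j) := by
  classical
  have hg' : g ∣ ℓ + 1 := hg ▸ Nat.gcd_dvd_left _ _
  have hgpos : 0 < g := by
    rcases Nat.eq_zero_or_pos g with h | h
    · exfalso
      rw [hg] at h
      have := Nat.eq_zero_of_gcd_eq_zero_left h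
      omega
    · exact h
  have hdg : (ℓ + 1) = g * d := by rw [hd]; exact (Nat.mul_div_cancel' hg').symm
  have hdpos : 0 < d := by
    rcases Nat.eq_zero_or_pos d with h | h
    · rw [h, mul_zero] at hdg; omega
    · exact h
  -- move to ZMod (ℓ+1)
  have hσ : finRotate (ℓ + 1) = (Equiv.addRight (1 : ZMod (ℓ+1)) : Equiv.Perm (Fin (ℓ+1))) := by
    ext i
    simp [finRotate_succ_apply]
    rfl
  set κ : ZMod (ℓ+1) := (k : ZMod (ℓ+1)) with hκ
  have hpow : ∀ (j : ℕ), (Equiv.addRight (1 : ZMod (ℓ+1))) ^ j =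
      Equiv.addRight ((j : ZMod (ℓ+1))) := by
    intro j
    induction j with
    | zero => ext x; simp
    | succ i ih =>
      ext x
      rw [pow_succ]
      simp only [Equiv.Perm.mul_apply, ih, Equiv.coe_addRight]
      push_cast
      ring
  have hzpow : ∀ (z : ℤ), (Equiv.addRight (1 : ZMod (ℓ+1))) ^ z =
      Equiv.addRight ((z : ZMod (ℓ+1))) := by
    intro z
    induction z using Int.induction_on with
    | zero => ext x; simp
    | succ i ih =>
      ext x
      rw [zpow_add, zpow_one]
      simp only [Equiv.Perm.mul_apply, ih, Equiv.coe_addRight]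
      push_cast
      ring
    | pred i ih =>
      have hinv : (Equiv.addRight (1 : ZMod (ℓ+1)))⁻¹ = Equiv.addRight (-1 : ZMod (ℓ+1)) := by
        ext y
        apply (Equiv.addRight (1 : ZMod (ℓ+1))).injective
        simp [Equiv.Perm.coe_inv]
      rw [show -(i:ℤ) - 1 = (-(i:ℤ)) + (-1) from by ring, zpow_add, ih, zpow_neg_one, hinv]
      ext x
      simp only [Equiv.Perm.mul_apply, Equiv.coe_addRight]
      push_cast
      ring
  have hiff : ∀ τ : Equiv.Perm (ZMod (ℓ+1)),
      (τ * (Equiv.addRight (1 : ZMod (ℓ+1))) ^ k * τ⁻¹ ∈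
        Subgroup.zpowers (Equiv.addRight (1 : ZMod (ℓ+1)))) ↔
      (∃ m : ZMod (ℓ+1), ∀ x, τ (x + κ) = τ x + m) := by
    intro τ
    constructor
    · intro h
      obtain ⟨z, hz⟩ := Subgroup.mem_zpowers_iff.mp h
      refine ⟨((z : ℤ) : ZMod (ℓ+1)), fun x => ?_⟩
      have happ : ((Equiv.addRight (1 : ZMod (ℓ+1))) ^ z) (τ x) =
          (τ * (Equiv.addRight (1 : ZMod (ℓ+1))) ^ k * τ⁻¹) (τ x) := by rw [hz]
      rw [hzpow, hpow] at happ
      simp only [Equiv.Perm.mul_apply, Equiv.coe_addRight, Equiv.Perm.coe_inv, Equiv.symm_apply_apply] at happ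
      exact happ.symm
    · rintro ⟨m, hm⟩
      refine Subgroup.mem_zpowers_iff.mpr ⟨((m.val : ℕ) : ℤ), ?_⟩
      rw [hzpow]
      have hmv : ((m.val : ℤ) : ZMod (ℓ+1)) = m := by
        push_cast
        exact ZMod.natCast_rightInverse m
      rw [hmv]
      ext x
      simp only [Equiv.Perm.mul_apply, Equiv.coe_addRight, hpow]
      rw [hm, Equiv.Perm.coe_inv, Equiv.apply_symm_apply]
  -- helper arithmetic facts
  have hn0 : (ℓ + 1) ≠ 0 := by omega
  have hgcdmod : ∀ i : ℕ, Nat.gcd (ℓ+1) (i % (ℓ+1)) = Nat.gcd (ℓ+1) i := by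
    intro i
    conv_rhs => rw [Nat.gcd_rec]
    rw [Nat.gcd_comm]
  have hκord : addOrderOf κ = d := by
    rw [hκ, ZMod.addOrderOf_coe k hn0, ← hg, ← hd]
  have hkey_ord : ∀ m : ZMod (ℓ+1), addOrderOf m = (ℓ+1) / Nat.gcd (ℓ+1) m.val := by
    intro m
    have h1 := ZMod.addOrderOf_coe m.val hn0
    have h2 : addOrderOf m = addOrderOf ((m.val : ℕ) : ZMod (ℓ+1)) :=
      congrArg addOrderOf (ZMod.natCast_rightInverse m).symm
    rw [h2, h1]
  have hord_iff : ∀ m : ZMod (ℓ+1), addOrderOf m = d ↔ Nat.gcd (ℓ+1) m.val = g := by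
    intro m
    rw [hkey_ord m]
    constructor
    · intro h
      have h1 : Nat.gcd (ℓ+1) m.val ∣ ℓ+1 := Nat.gcd_dvd_left _ _
      have h2 : (ℓ+1) / ((ℓ+1) / Nat.gcd (ℓ+1) m.val) = Nat.gcd (ℓ+1) m.val :=
        Nat.div_div_self h1 hn0
      rw [h, hd] at h2
      rw [← h2, Nat.div_div_self hg' hn0]
    · intro h
      rw [h, hd]
  have hgcdg : Nat.gcd (ℓ+1) g = g := Nat.gcd_eq_right hg'
  have hKord : addOrderOf ((g : ZMod (ℓ+1))) = d := by
    rw [ZMod.addOrderOf_coe g hn0, hgcdg, hd]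
  have hmemK : ∀ m : ZMod (ℓ+1), Nat.gcd (ℓ+1) m.val = g →
      m ∈ AddSubgroup.zmultiples ((g : ℕ) : ZMod (ℓ+1)) := by
    intro m hm
    have hdvd : g ∣ m.val := hm ▸ Nat.gcd_dvd_right (ℓ+1) m.val
    refine AddSubgroup.mem_zmultiples_iff.mpr ⟨((m.val / g : ℕ) : ℤ), ?_⟩
    rw [natCast_zsmul, nsmul_eq_mul, ← Nat.cast_mul, Nat.div_mul_cancel hdvd]
    exact ZMod.natCast_rightInverse m
  have hκmemK : κ ∈ AddSubgroup.zmultiples ((g : ℕ) : ZMod (ℓ+1)) := by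
    apply hmemK
    rw [hκ, ZMod.val_natCast, hgcdmod, ← hg]
  have hK : AddSubgroup.zmultiples κ = AddSubgroup.zmultiples ((g : ℕ) : ZMod (ℓ+1)) := by
    apply AddSubgroup.eq_of_le_of_card_ge (AddSubgroup.zmultiples_le.mpr hκmemK)
    rw [Nat.card_zmultiples, Nat.card_zmultiples, hκord, hKord]
  have hQcard : Nat.card (ZMod (ℓ+1) ⧸ AddSubgroup.zmultiples κ) = g := by
    have h1 := AddSubgroup.card_eq_card_quotient_mul_card_addSubgroup
      (AddSubgroup.zmultiples κ)
    rw [Nat.card_zmod, Nat.card_zmultiples, hκord] at h1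
    have h2 : Nat.card (ZMod (ℓ+1) ⧸ AddSubgroup.zmultiples κ) * d = g * d := by omega
    exact Nat.eq_of_mul_eq_mul_right hdpos h2
  -- per-fiber cardinality
  have hfib : ∀ m : ZMod (ℓ+1),
      Nat.card {τ : Equiv.Perm (ZMod (ℓ+1)) // ∀ x, τ (x + κ) = τ x + m} =
        if Nat.gcd (ℓ+1) m.val = g then Nat.factorial g * d ^ g else 0 := by
    intro m
    by_cases hm : Nat.gcd (ℓ+1) m.val = g
    · rw [if_pos hm]
      have h1 : addOrderOf m = d := (hord_iff m).mpr hm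
      have hordm : addOrderOf m = addOrderOf κ := by rw [h1, hκord]
      have hmem : m ∈ AddSubgroup.zmultiples κ := hK ▸ hmemK m hm
      rw [fiber_card hordm hmem, hQcard, hκord]
    · rw [if_neg hm]
      have hempty : IsEmpty {τ : Equiv.Perm (ZMod (ℓ+1)) // ∀ x, τ (x + κ) = τ x + m} := by
        constructor
        rintro ⟨τ, hτ⟩
        exact hm ((hord_iff m).mp (by rw [pergen_order τ hτ, hκord]))
      exact Nat.card_of_isEmpty
  -- sigma decomposition
  let E2 : {τ : Equiv.Perm (ZMod (ℓ+1)) // ∃ m, ∀ x, τ (x + κ) = τ x + m} ≃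
      Σ m : ZMod (ℓ+1), {τ : Equiv.Perm (ZMod (ℓ+1)) // ∀ x, τ (x + κ) = τ x + m} :=
    { toFun := fun τ => ⟨τ.1 κ - τ.1 0, τ.1, by
        obtain ⟨m, hm⟩ := τ.2
        have h0 := hm 0
        rw [zero_add] at h0
        have hmval : τ.1 κ - τ.1 0 = m := by rw [h0]; abel
        rw [hmval]
        exact hm⟩
      invFun := fun p => ⟨p.2.1, ⟨p.1, p.2.2⟩⟩
      left_inv := fun τ => Subtype.ext rfl
      right_inv := fun p => by
        apply Sigma.subtype_ext
        · dsimp only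
          have h0 := p.2.2 0
          rw [zero_add] at h0
          rw [h0]; abel
        · rfl }
  -- put everything together
  have key : Nat.card {τ : Equiv.Perm (ZMod (ℓ+1)) //
      τ * (Equiv.addRight (1 : ZMod (ℓ+1))) ^ k * τ⁻¹ ∈
        Subgroup.zpowers (Equiv.addRight (1 : ZMod (ℓ+1)))} =
      ((Finset.Icc 1 (ℓ + 1)).filter fun i => Nat.gcd (ℓ + 1) i = g).card *
        ∏ j ∈ Finset.range g, (ℓ + 1 - d * j) := by
    rw [Nat.card_congr (Equiv.subtypeEquivRight hiff), Nat.card_congr E2,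
      Nat.card_eq_fintype_card, Fintype.card_sigma]
    have hsum : ∀ m : ZMod (ℓ+1),
        Fintype.card {τ : Equiv.Perm (ZMod (ℓ+1)) // ∀ x, τ (x + κ) = τ x + m} =
          if Nat.gcd (ℓ+1) m.val = g then Nat.factorial g * d ^ g else 0 := by
      intro m
      rw [← Nat.card_eq_fintype_card]
      exact hfib m
    rw [Finset.sum_congr rfl (fun m _ => hsum m)]
    rw [Finset.sum_ite, Finset.sum_const, Finset.sum_const_zero, add_zero, smul_eq_mul]
    -- filter cardinality
    have hcardfilter :
        (Finset.univ.filter fun m : ZMod (ℓ+1) => Nat.gcd (ℓ+1) m.val = g).card =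
        ((Finset.Icc 1 (ℓ + 1)).filter fun i => Nat.gcd (ℓ + 1) i = g).card := by
      symm
      apply Finset.card_bij (fun (i : ℕ) _ => ((i : ZMod (ℓ+1))))
      · intro i hi
        simp only [Finset.mem_filter, Finset.mem_Icc] at hi
        simp only [Finset.mem_filter, Finset.mem_univ, true_and]
        rw [ZMod.val_natCast, hgcdmod]
        exact hi.2
      · intro i hi i' hi' hii
        simp only [Finset.mem_filter, Finset.mem_Icc] at hi hi'
        have hv : i % (ℓ+1) = i' % (ℓ+1) := by
          have := congrArg ZMod.val hii
          rwa [ZMod.val_natCast, ZMod.val_natCast] at this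
        rcases Nat.lt_or_ge i (ℓ+1) with h1 | h1 <;>
          rcases Nat.lt_or_ge i' (ℓ+1) with h2 | h2
        · rwa [Nat.mod_eq_of_lt h1, Nat.mod_eq_of_lt h2] at hv
        · have : i' = ℓ+1 := by omega
          rw [Nat.mod_eq_of_lt h1, this, Nat.mod_self] at hv
          omega
        · have : i = ℓ+1 := by omega
          rw [Nat.mod_eq_of_lt h2, this, Nat.mod_self] at hv
          omega
        · omega
      · intro m hm
        simp only [Finset.mem_filter, Finset.mem_univ, true_and] at hm
        by_cases h0 : m = 0
        · refine ⟨ℓ+1, ?_, ?_⟩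
          · simp only [Finset.mem_filter, Finset.mem_Icc]
            refine ⟨⟨by omega, le_refl _⟩, ?_⟩
            rw [h0, ZMod.val_zero, Nat.gcd_zero_right] at hm
            rw [Nat.gcd_self]
            exact hm
          · rw [h0, ZMod.natCast_self]
        · refine ⟨m.val, ?_, ?_⟩
          · simp only [Finset.mem_filter, Finset.mem_Icc]
            have hvpos : 0 < m.val := by
              rcases Nat.eq_zero_or_pos m.val with h | h
              · exact absurd ((ZMod.val_eq_zero m).mp h) h0
              · exact h
            have hvlt : m.val < ℓ+1 := ZMod.val_lt m
            exact ⟨⟨hvpos, by omega⟩, hm⟩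
          · exact ZMod.natCast_rightInverse m
    rw [hcardfilter]
    -- the product
    have hprod : ∏ j ∈ Finset.range g, (ℓ + 1 - d * j) = Nat.factorial g * d ^ g := by
      rw [← Finset.prod_range_reflect]
      have hterm : ∀ j ∈ Finset.range g, (ℓ + 1 - d * (g - 1 - j)) = d * (j + 1) := by
        intro j hj
        rw [Finset.mem_range] at hj
        have h1 : g - 1 - j = g - (j + 1) := by omega
        have h2 : d * (g - (j+1)) = d * g - d * (j+1) := Nat.mul_sub d g (j+1)
        have h3 : d * (j+1) ≤ d * g := Nat.mul_le_mul_left d (by omega)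
        rw [h1, hdg, h2]
        have h4 : g * d = d * g := by ring
        rw [h4]
        omega
      rw [Finset.prod_congr rfl hterm, Finset.prod_mul_distrib, Finset.prod_const,
        Finset.card_range, Finset.prod_range_add_one_eq_factorial]
      ring
    rw [hprod]
  rw [hσ]
  exact key
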